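/- Under the construction of the previous statement (uniform random index M, exact π-sample at position M, chain run backwards and forwards with a π-reversible kernel K), if R: Θ^L → S_L is an ordinal ranking function chosen independently of M, then the rank statistic R_M(θ_1,...,θ_L) is exactly uniformly distributed on {1,...,L}. -/

import Mathlib

open MeasureTheory ProbabilityTheory

noncomputable def chainFrom {Θ : Type*} [MeasurableSpace Θ]
    (K : Kernel Θ Θ) : (n : ℕ) → Θ → Measure (Fin n → Θ)
  | 0, _ => Measure.dirac (fun i => i.elim0)
  | n + 1, θ => (K θ).bind (fun θ1 => (chainFrom K n θ1).map (Fin.cons θ1))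

def assembleTraj {Θ : Type*} (L : ℕ) (m : Fin L) (θ : Θ)
    (b : Fin (m : ℕ) → Θ) (f : Fin (L - 1 - (m : ℕ)) → Θ) : Fin L → Θ :=
  fun i =>
    if h : (i : ℕ) < (m : ℕ) then b ⟨(m : ℕ) - 1 - (i : ℕ), by omega⟩
    else if h' : (i : ℕ) = (m : ℕ) then θ
    else f ⟨(i : ℕ) - (m : ℕ) - 1, by omega⟩

/-- Joint law of the trajectory given the starting index `m`: an exact `π`-sample is
placed at position `m`, and the chain is run backwards `m` steps and forwards
`L - 1 - m` steps using the kernel `K`. -/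
noncomputable def backForthLaw {Θ : Type*} [MeasurableSpace Θ]
    (K : Kernel Θ Θ) (π : Measure Θ) (L : ℕ) (m : Fin L) : Measure (Fin L → Θ) :=
  π.bind (fun θ =>
    ((chainFrom K (m : ℕ) θ).prod (chainFrom K (L - 1 - (m : ℕ)) θ)).map
      (fun p => assembleTraj L m θ p.1 p.2))

section Aux

variable {Θ : Type*} [MeasurableSpace Θ]

lemma cons_mk_zero {α : Type*} {n : ℕ} (x : α) (v : Fin n → α) (h : 0 < n + 1) :
    (Fin.cons x v : Fin (n+1) → α) ⟨0, h⟩ = x := rfl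

lemma cons_mk_succ {α : Type*} {n : ℕ} (x : α) (v : Fin n → α) (k : ℕ) (h : k + 1 < n + 1) :
    (Fin.cons x v : Fin (n+1) → α) ⟨k + 1, h⟩ = v ⟨k, by omega⟩ := by
  have e : (⟨k + 1, h⟩ : Fin (n + 1)) = Fin.succ ⟨k, by omega⟩ := rfl
  rw [e, Fin.cons_succ]

lemma measurable_consFn (n : ℕ) :
    Measurable (fun p : Θ × (Fin n → Θ) => (Fin.cons p.1 p.2 : Fin (n+1) → Θ)) := by
  rw [measurable_pi_iff]
  intro i
  refine Fin.cases ?_ ?_ i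
  · simpa using measurable_fst
  · intro j
    simp only [Fin.cons_succ]; exact (measurable_pi_apply j).comp measurable_snd

lemma measurable_castFn {a b : ℕ} (h : a = b) :
    Measurable (fun (v : Fin b → Θ) (i : Fin a) => v (Fin.cast h i)) := by
  rw [measurable_pi_iff]
  intro i
  exact measurable_pi_apply _

lemma measurable_consLeft (n : ℕ) (θ1 : Θ) :
    Measurable (fun v : Fin n → Θ => (Fin.cons θ1 v : Fin (n+1) → Θ)) :=
  (measurable_consFn n).comp measurable_prodMk_left

noncomputable def chainKer (K : Kernel Θ Θ) : (n : ℕ) → Kernel Θ (Fin n → Θ)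
  | 0 => Kernel.const Θ (Measure.dirac (fun i => i.elim0))
  | n + 1 => ((Kernel.id ×ₖ chainKer K n).map
      (fun p : Θ × (Fin n → Θ) => Fin.cons p.1 p.2)) ∘ₖ K

instance chainKer_markov (K : Kernel Θ Θ) [IsMarkovKernel K] (n : ℕ) :
    IsMarkovKernel (chainKer K n) := by
  induction n with
  | zero =>
      rw [chainKer]
      infer_instance
  | succ n ih =>
      rw [chainKer]
      haveI := Kernel.IsMarkovKernel.map (Kernel.id ×ₖ chainKer K n) (measurable_consFn n)
      infer_instance

lemma mapCons_eq (K : Kernel Θ Θ) [IsMarkovKernel K] (n : ℕ) (θ1 : Θ) :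
    ((Kernel.id ×ₖ chainKer K n).map
      (fun p : Θ × (Fin n → Θ) => (Fin.cons p.1 p.2 : Fin (n+1) → Θ))) θ1
      = (chainKer K n θ1).map (fun v : Fin n → Θ => (Fin.cons θ1 v : Fin (n+1) → Θ)) := by
  rw [Kernel.map_apply _ (measurable_consFn n), Kernel.prod_apply, Kernel.id_apply,
    Measure.dirac_prod, Measure.map_map (measurable_consFn n) measurable_prodMk_left]
  rfl

lemma measurable_mapCons (K : Kernel Θ Θ) [IsMarkovKernel K] (n : ℕ) :
    Measurable (fun θ1 : Θ =>
      (chainKer K n θ1).map (fun v : Fin n → Θ => (Fin.cons θ1 v : Fin (n+1) → Θ))) := by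
  have : (fun θ1 : Θ =>
        (chainKer K n θ1).map (fun v : Fin n → Θ => (Fin.cons θ1 v : Fin (n+1) → Θ)))
      = fun θ1 => ((Kernel.id ×ₖ chainKer K n).map
        (fun p : Θ × (Fin n → Θ) => (Fin.cons p.1 p.2 : Fin (n+1) → Θ))) θ1 :=
    funext fun θ1 => (mapCons_eq K n θ1).symm
  rw [this]
  exact Kernel.measurable _

lemma chainKer_succ (K : Kernel Θ Θ) [IsMarkovKernel K] (n : ℕ) (θ : Θ) :
    chainKer K (n + 1) θ = (K θ).bind (fun θ1 => (chainKer K n θ1).map (Fin.cons θ1)) := by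
  rw [chainKer, Kernel.comp_apply]
  congr 1
  funext θ1
  exact mapCons_eq K n θ1

lemma chainKer_apply (K : Kernel Θ Θ) [IsMarkovKernel K] (n : ℕ) (θ : Θ) :
    chainKer K n θ = chainFrom K n θ := by
  induction n generalizing θ with
  | zero => rw [chainKer, chainFrom, Kernel.const_apply]
  | succ n ih =>
      rw [chainKer_succ, chainFrom]
      congr 1
      funext θ1
      rw [ih]

lemma chainKer_cast (K : Kernel Θ Θ) [IsMarkovKernel K] {a b : ℕ} (h : a = b) (θ : Θ) :
    chainKer K b θ
      = (chainKer K a θ).map (fun (v : Fin a → Θ) (i : Fin b) => v (Fin.cast h.symm i)) := by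
  subst h
  have : (fun (v : Fin a → Θ) (i : Fin a) => v (Fin.cast rfl i)) = id := rfl
  rw [this, Measure.map_id]

lemma measurable_assemble (L : ℕ) (m : Fin L) :
    Measurable (fun q : Θ × ((Fin (m : ℕ) → Θ) × (Fin (L - 1 - (m : ℕ)) → Θ)) =>
      assembleTraj L m q.1 q.2.1 q.2.2) := by
  rw [measurable_pi_iff]
  intro i
  unfold assembleTraj
  by_cases h : (i : ℕ) < (m : ℕ)
  · simp only [dif_pos h]
    exact (measurable_pi_apply _).comp (measurable_fst.comp measurable_snd)
  · by_cases h' : (i : ℕ) = (m : ℕ)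
    · simp only [dif_neg h, dif_pos h']
      exact measurable_fst
    · simp only [dif_neg h, dif_neg h']
      exact (measurable_pi_apply _).comp (measurable_snd.comp measurable_snd)

noncomputable def bfKer (K : Kernel Θ Θ) (L : ℕ) (m : Fin L) : Kernel Θ (Fin L → Θ) :=
  (Kernel.id ×ₖ (chainKer K (m : ℕ) ×ₖ chainKer K (L - 1 - (m : ℕ)))).map
    (fun q => assembleTraj L m q.1 q.2.1 q.2.2)

instance bfKer_markov (K : Kernel Θ Θ) [IsMarkovKernel K] (L : ℕ) (m : Fin L) :
    IsMarkovKernel (bfKer K L m) :=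
  Kernel.IsMarkovKernel.map _ (measurable_assemble L m)

lemma bfKer_apply (K : Kernel Θ Θ) [IsMarkovKernel K] (L : ℕ) (m : Fin L) (θ : Θ) :
    bfKer K L m θ
      = ((chainFrom K (m : ℕ) θ).prod (chainFrom K (L - 1 - (m : ℕ)) θ)).map
          (fun p => assembleTraj L m θ p.1 p.2) := by
  rw [bfKer, Kernel.map_apply _ (measurable_assemble L m), Kernel.prod_apply,
    Kernel.id_apply, Kernel.prod_apply, Measure.dirac_prod,
    Measure.map_map (measurable_assemble L m) measurable_prodMk_left,
    chainKer_apply, chainKer_apply]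
  rfl

lemma bfKer_apply' (K : Kernel Θ Θ) [IsMarkovKernel K] (L : ℕ) (m : Fin L) (θ : Θ) :
    bfKer K L m θ
      = ((chainKer K (m : ℕ) θ).prod (chainKer K (L - 1 - (m : ℕ)) θ)).map
          (fun p => assembleTraj L m θ p.1 p.2) := by
  rw [bfKer, Kernel.map_apply _ (measurable_assemble L m), Kernel.prod_apply,
    Kernel.id_apply, Kernel.prod_apply, Measure.dirac_prod,
    Measure.map_map (measurable_assemble L m) measurable_prodMk_left]
  rfl

lemma backForthLaw_eq (K : Kernel Θ Θ) [IsMarkovKernel K] (π : Measure Θ) (L : ℕ) (m : Fin L) :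
    backForthLaw K π L m = π.bind (fun θ => bfKer K L m θ) := by
  unfold backForthLaw
  congr 1
  funext θ
  rw [bfKer_apply]

lemma backForthLaw_apply (K : Kernel Θ Θ) [IsMarkovKernel K] (π : Measure Θ) (L : ℕ)
    (m : Fin L) {s : Set (Fin L → Θ)} (hs : MeasurableSet s) :
    backForthLaw K π L m s = ∫⁻ θ, bfKer K L m θ s ∂π := by
  rw [backForthLaw_eq, Measure.bind_apply hs (Kernel.measurable _).aemeasurable]

instance backForthLaw_prob (K : Kernel Θ Θ) [IsMarkovKernel K] (π : Measure Θ)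
    [IsProbabilityMeasure π] (L : ℕ) (m : Fin L) :
    IsProbabilityMeasure (backForthLaw K π L m) := by
  constructor
  rw [backForthLaw_apply K π L m MeasurableSet.univ]
  simp [measure_univ]

end Aux

section Key

variable {Θ : Type*} [MeasurableSpace Θ]

/-- The crucial pointwise identity: assembling with pivot `j+1`, first backward step `θ1`,
equals assembling with pivot `j`, first forward step `θ`. -/
lemma assemble_shift (L j n : ℕ) (hj1 : j + 1 < L) (hn : L - 1 - (j + 1) = n)
    (hn2 : L - 1 - j = n + 1)
    (θ θ1 : Θ) (b : Fin j → Θ) (f : Fin n → Θ) :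
    (assembleTraj L ⟨j, by omega⟩ θ1 b
        (fun i => (Fin.cons θ f : Fin (n+1) → Θ) (Fin.cast hn2 i)) : Fin L → Θ)
      = assembleTraj L ⟨j + 1, hj1⟩ θ (Fin.cons θ1 b)
          (fun i => f (Fin.cast hn i)) := by
  funext i
  unfold assembleTraj
  simp only
  rcases lt_trichotomy (i : ℕ) j with h | h | h
  · rw [dif_pos h, dif_pos (show (i : ℕ) < j + 1 by omega)]
    have e1 : (⟨j + 1 - 1 - (i : ℕ), by omega⟩ : Fin (j + 1)) = ⟨(j - 1 - (i : ℕ)) + 1, by omega⟩ := by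
      apply Fin.ext; simp; omega
    rw [e1, cons_mk_succ]
  · rw [dif_neg (by omega), dif_pos h, dif_pos (show (i : ℕ) < j + 1 by omega)]
    have e1 : (⟨j + 1 - 1 - (i : ℕ), by omega⟩ : Fin (j + 1)) = ⟨0, by omega⟩ := by
      apply Fin.ext; simp; omega
    rw [e1, cons_mk_zero]
  · rw [dif_neg (by omega), dif_neg (by omega)]
    by_cases h' : (i : ℕ) = j + 1
    · rw [dif_neg (show ¬ (i : ℕ) < j + 1 by omega), dif_pos h']
      have e1 : (Fin.cast hn2 ⟨(i : ℕ) - j - 1, by omega⟩ : Fin (n + 1)) = ⟨0, by omega⟩ := by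
        apply Fin.ext; simp; omega
      rw [e1, cons_mk_zero]
    · rw [dif_neg (by omega), dif_neg h']
      have e1 : (Fin.cast hn2 ⟨(i : ℕ) - j - 1, by omega⟩ : Fin (n + 1))
          = ⟨((i : ℕ) - (j + 1) - 1) + 1, by omega⟩ := by
        apply Fin.ext; simp; omega
      rw [e1, cons_mk_succ]
      congr 1

end Key

section Main

variable {Θ : Type*} [MeasurableSpace Θ]

lemma chainKer_cast' (K : Kernel Θ Θ) [IsMarkovKernel K] {a b : ℕ} (h : b = a) (θ : Θ) :
    chainKer K b θ
      = (chainKer K a θ).map (fun (v : Fin a → Θ) (i : Fin b) => v (Fin.cast h i)) := by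
  subst h
  have : (fun (v : Fin b → Θ) (i : Fin b) => v (Fin.cast rfl i)) = id := rfl
  rw [this, Measure.map_id]

lemma prod_map_right {α β γ : Type*} [MeasurableSpace α] [MeasurableSpace β] [MeasurableSpace γ]
    (μ : Measure α) (ν : Measure β) [SFinite μ] [SFinite ν] {g : β → γ} (hg : Measurable g) :
    μ.prod (ν.map g) = (μ.prod ν).map (Prod.map id g) := by
  conv_lhs => rw [← Measure.map_id (μ := μ)]
  rw [Measure.map_prod_map _ _ measurable_id hg]

lemma bf_adjacent (K : Kernel Θ Θ) [IsMarkovKernel K] (π : Measure Θ) [IsProbabilityMeasure π]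
    (hrev : π ⊗ₘ K = (π ⊗ₘ K).map Prod.swap) (L j n : ℕ)
    (hj1 : j + 1 < L) (hj : j < L) (hn : L - 1 - (j + 1) = n) (hn2 : L - 1 - j = n + 1) :
    backForthLaw K π L ⟨j + 1, hj1⟩ = backForthLaw K π L ⟨j, hj⟩ := by
  ext s hs
  -- the common inner quantity
  set H : Θ → Θ → ENNReal := fun θ θ1 =>
    ((chainKer K j θ1).prod (chainKer K n θ))
      {p : (Fin j → Θ) × (Fin n → Θ) |
        assembleTraj L ⟨j + 1, hj1⟩ θ (Fin.cons θ1 p.1) (fun i => p.2 (Fin.cast hn i)) ∈ s}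
    with hHdef
  -- measurability of the assembling maps
  have hA1 : ∀ θ : Θ, Measurable
      (fun p : (Fin (j + 1) → Θ) × (Fin (L - 1 - (j + 1)) → Θ) =>
        assembleTraj L ⟨j + 1, hj1⟩ θ p.1 p.2) := fun θ =>
    (measurable_assemble L ⟨j + 1, hj1⟩).comp measurable_prodMk_left
  have hA2 : ∀ θ1 : Θ, Measurable
      (fun p : (Fin j → Θ) × (Fin (L - 1 - j) → Θ) =>
        assembleTraj L ⟨j, hj⟩ θ1 p.1 p.2) := fun θ1 =>
    (measurable_assemble L ⟨j, hj⟩).comp measurable_prodMk_left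
  have hC1 : Measurable (fun (v : Fin n → Θ) (i : Fin (L - 1 - (j + 1))) => v (Fin.cast hn i)) :=
    measurable_castFn hn
  have hC2 : Measurable
      (fun (v : Fin (n + 1) → Θ) (i : Fin (L - 1 - j)) => v (Fin.cast hn2 i)) :=
    measurable_castFn hn2
  -- joint measurability of H
  have hHmeas : Measurable (fun p : Θ × Θ => H p.1 p.2) := by
    have hF : Measurable (fun q : (Θ × Θ) × ((Fin j → Θ) × (Fin n → Θ)) =>
        assembleTraj L ⟨j + 1, hj1⟩ q.1.1 (Fin.cons q.1.2 q.2.1)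
          (fun i => q.2.2 (Fin.cast hn i))) := by
      have hg : Measurable (fun q : (Θ × Θ) × ((Fin j → Θ) × (Fin n → Θ)) =>
          ((q.1.1, ((Fin.cons q.1.2 q.2.1 : Fin (j+1) → Θ),
            fun i : Fin (L - 1 - (j+1)) => q.2.2 (Fin.cast hn i))) :
            Θ × ((Fin (j+1) → Θ) × (Fin (L - 1 - (j+1)) → Θ)))) := by
        refine (measurable_fst.comp measurable_fst).prodMk (Measurable.prodMk ?_ ?_)
        · exact (measurable_consFn j).comp
            ((measurable_snd.comp measurable_fst).prodMk (measurable_fst.comp measurable_snd))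
        · exact hC1.comp (measurable_snd.comp measurable_snd)
      exact (measurable_assemble L ⟨j + 1, hj1⟩).comp hg
    have hT : MeasurableSet {q : (Θ × Θ) × ((Fin j → Θ) × (Fin n → Θ)) |
        assembleTraj L ⟨j + 1, hj1⟩ q.1.1 (Fin.cons q.1.2 q.2.1)
          (fun i => q.2.2 (Fin.cast hn i)) ∈ s} := hF hs
    have hmain := Kernel.measurable_kernel_prodMk_left
      (κ := (chainKer K j).comap Prod.snd measurable_snd
        ×ₖ (chainKer K n).comap Prod.fst measurable_fst) hT
    have he : (fun a : Θ × Θ =>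
        ((chainKer K j).comap Prod.snd measurable_snd
          ×ₖ (chainKer K n).comap Prod.fst measurable_fst) a
          (Prod.mk a ⁻¹' {q : (Θ × Θ) × ((Fin j → Θ) × (Fin n → Θ)) |
            assembleTraj L ⟨j + 1, hj1⟩ q.1.1 (Fin.cons q.1.2 q.2.1)
              (fun i => q.2.2 (Fin.cast hn i)) ∈ s}))
        = fun p : Θ × Θ => H p.1 p.2 := by
      funext a
      simp only [Kernel.prod_apply, Kernel.comap_apply]
      rfl
    rwa [he] at hmain
  -- expansion of the left-hand side
  have key1 : ∀ θ : Θ, bfKer K L ⟨j + 1, hj1⟩ θ s = ∫⁻ θ1, H θ θ1 ∂(K θ) := by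
    intro θ
    have h0 : bfKer K L ⟨j + 1, hj1⟩ θ
        = ((chainKer K (j + 1) θ).prod (chainKer K (L - 1 - (j + 1)) θ)).map
            (fun p => assembleTraj L ⟨j + 1, hj1⟩ θ p.1 p.2) := bfKer_apply' K L _ θ
    rw [h0, Measure.map_apply (hA1 θ) hs, chainKer_cast' K hn θ,
      prod_map_right _ _ hC1, Measure.map_apply (measurable_id.prodMap hC1) ((hA1 θ) hs),
      Measure.prod_apply ((measurable_id.prodMap hC1) ((hA1 θ) hs)), chainKer_succ K j θ,
      Measure.lintegral_bind (measurable_mapCons K j).aemeasurable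
        (measurable_measure_prodMk_left ((measurable_id.prodMap hC1) ((hA1 θ) hs))).aemeasurable]
    congr 1
    funext θ1
    rw [lintegral_map
      (measurable_measure_prodMk_left ((measurable_id.prodMap hC1) ((hA1 θ) hs)))
      (measurable_consLeft j θ1)]
    have hT' : MeasurableSet {p : (Fin j → Θ) × (Fin n → Θ) |
        assembleTraj L ⟨j + 1, hj1⟩ θ (Fin.cons θ1 p.1) (fun i => p.2 (Fin.cast hn i)) ∈ s} :=
      ((measurable_assemble L ⟨j + 1, hj1⟩).comp
        (measurable_const.prodMk
          (((measurable_consFn j).comp (measurable_const.prodMk measurable_fst)).prodMk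
            (hC1.comp measurable_snd)))) hs
    simp only [hHdef]
    rw [Measure.prod_apply hT']
    rfl
  -- expansion of the right-hand side
  have key2 : ∀ θ1 : Θ, bfKer K L ⟨j, hj⟩ θ1 s = ∫⁻ θ, H θ θ1 ∂(K θ1) := by
    intro θ1
    have h0 : bfKer K L ⟨j, hj⟩ θ1
        = ((chainKer K j θ1).prod (chainKer K (L - 1 - j) θ1)).map
            (fun p => assembleTraj L ⟨j, hj⟩ θ1 p.1 p.2) := bfKer_apply' K L _ θ1
    rw [h0, Measure.map_apply (hA2 θ1) hs, chainKer_cast' K hn2 θ1,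
      prod_map_right _ _ hC2, Measure.map_apply (measurable_id.prodMap hC2) ((hA2 θ1) hs),
      Measure.prod_apply_symm ((measurable_id.prodMap hC2) ((hA2 θ1) hs)), chainKer_succ K n θ1,
      Measure.lintegral_bind (measurable_mapCons K n).aemeasurable
        (measurable_measure_prodMk_right ((measurable_id.prodMap hC2) ((hA2 θ1) hs))).aemeasurable]
    congr 1
    funext θ
    rw [lintegral_map
      (measurable_measure_prodMk_right ((measurable_id.prodMap hC2) ((hA2 θ1) hs)))
      (measurable_consLeft n θ)]
    have hsetH : {p : (Fin j → Θ) × (Fin n → Θ) |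
          assembleTraj L ⟨j + 1, hj1⟩ θ (Fin.cons θ1 p.1) (fun i => p.2 (Fin.cast hn i)) ∈ s}
        = {p : (Fin j → Θ) × (Fin n → Θ) |
          assembleTraj L ⟨j, hj⟩ θ1 p.1
            (fun i => (Fin.cons θ p.2 : Fin (n+1) → Θ) (Fin.cast hn2 i)) ∈ s} := by
      ext p
      rw [Set.mem_setOf_eq, Set.mem_setOf_eq,
        ← assemble_shift L j n hj1 hn hn2 θ θ1 p.1 p.2]
    have hT2' : MeasurableSet {p : (Fin j → Θ) × (Fin n → Θ) |
        assembleTraj L ⟨j, hj⟩ θ1 p.1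
          (fun i => (Fin.cons θ p.2 : Fin (n+1) → Θ) (Fin.cast hn2 i)) ∈ s} :=
      ((measurable_assemble L ⟨j, hj⟩).comp
        (measurable_const.prodMk
          (measurable_fst.prodMk
            (hC2.comp ((measurable_consFn n).comp
              (measurable_const.prodMk measurable_snd)))))) hs
    simp only [hHdef]
    rw [hsetH, Measure.prod_apply_symm hT2']
    rfl
  -- put everything together using reversibility
  calc backForthLaw K π L ⟨j + 1, hj1⟩ s
      = ∫⁻ θ, ∫⁻ θ1, H θ θ1 ∂(K θ) ∂π := by
        rw [backForthLaw_apply K π L _ hs]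
        exact lintegral_congr key1
    _ = ∫⁻ p, H p.1 p.2 ∂(π ⊗ₘ K) := (Measure.lintegral_compProd hHmeas).symm
    _ = ∫⁻ p, (fun q : Θ × Θ => H q.2 q.1) (Prod.swap p) ∂(π ⊗ₘ K) := rfl
    _ = ∫⁻ p, H p.2 p.1 ∂((π ⊗ₘ K).map Prod.swap) :=
        (lintegral_map (hHmeas.comp measurable_swap) measurable_swap).symm
    _ = ∫⁻ p, H p.2 p.1 ∂(π ⊗ₘ K) := by rw [← hrev]
    _ = ∫⁻ θ1, ∫⁻ θ, H θ θ1 ∂(K θ1) ∂π :=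
        Measure.lintegral_compProd (hHmeas.comp measurable_swap)
    _ = backForthLaw K π L ⟨j, hj⟩ s := by
        rw [backForthLaw_apply K π L _ hs]
        exact (lintegral_congr key2).symm

end Main

/-- If `K` is reversible w.r.t. the probability measure `π` and `R` is a
(deterministic, hence independent of `M`) ordinal ranking, i.e. `R v` is a
permutation of `{1,...,L}` for every trajectory `v`, then the rank statistic
`R_M(θ_1,...,θ_L)`, with `M` uniform on `{1,...,L}`, is exactly uniformly
distributed: for every `k`, `P(R_M = k) = (1/L) ∑_m P_m(R_m = k) = 1/L`. -/
theorem rank_statistic_uniform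
    {Θ : Type*} [MeasurableSpace Θ]
    (K : Kernel Θ Θ) [IsMarkovKernel K]
    (π : Measure Θ) [IsProbabilityMeasure π]
    (hrev : π ⊗ₘ K = (π ⊗ₘ K).map Prod.swap)
    (L : ℕ) (hL : 0 < L)
    (R : (Fin L → Θ) → (Fin L → Fin L))
    (hRmeas : Measurable R)
    (hRperm : ∀ v, Function.Bijective (R v)) :
    ∀ k : Fin L,
      (L : ENNReal)⁻¹ * ∑ m : Fin L, backForthLaw K π L m {v | R v m = k}
        = (L : ENNReal)⁻¹ := by
  intro k
  have hall' : ∀ (mv : ℕ) (hm : mv < L),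
      backForthLaw K π L ⟨mv, hm⟩ = backForthLaw K π L ⟨0, hL⟩ := by
    intro mv
    induction mv with
    | zero => intro hm; rfl
    | succ j ih =>
        intro hm
        rw [bf_adjacent K π hrev L j (L - 1 - (j + 1)) hm (by omega) rfl (by omega)]
        exact ih (by omega)
  have hall : ∀ m : Fin L, backForthLaw K π L m = backForthLaw K π L ⟨0, hL⟩ :=
    fun m => hall' m.1 m.2
  have hs_meas : ∀ m : Fin L, MeasurableSet {v : Fin L → Θ | R v m = k} := by
    intro m
    exact ((measurable_pi_apply m).comp hRmeas) (measurableSet_singleton k)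
  have hdisj : Pairwise (Function.onFun Disjoint
      (fun m : Fin L => {v : Fin L → Θ | R v m = k})) := by
    intro m m' hmm'
    refine Set.disjoint_left.mpr ?_
    intro v hv hv'
    exact hmm' ((hRperm v).1 ((Set.mem_setOf_eq ▸ hv).trans (Set.mem_setOf_eq ▸ hv').symm))
  have hunion : (⋃ m : Fin L, {v : Fin L → Θ | R v m = k}) = Set.univ := by
    ext v
    simp only [Set.mem_iUnion, Set.mem_setOf_eq, Set.mem_univ, iff_true]
    exact (hRperm v).2 k
  have hsum : ∑ m : Fin L, backForthLaw K π L m {v | R v m = k} = 1 := by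
    calc ∑ m : Fin L, backForthLaw K π L m {v | R v m = k}
        = ∑ m : Fin L, backForthLaw K π L ⟨0, hL⟩ {v | R v m = k} :=
          Finset.sum_congr rfl (fun m _ => by rw [hall m])
      _ = ∑' m : Fin L, backForthLaw K π L ⟨0, hL⟩ {v | R v m = k} := (tsum_fintype _).symm
      _ = backForthLaw K π L ⟨0, hL⟩ (⋃ m : Fin L, {v | R v m = k}) :=
          (measure_iUnion hdisj hs_meas).symm
      _ = backForthLaw K π L ⟨0, hL⟩ Set.univ := by rw [hunion]
      _ = 1 := measure_univ
  rw [hsum, mul_one]
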